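/- Trees with linked leaves have bounded tree width: let T ⊆ {0,1}* be a finite prefix-closed binary tree in which every node has 0 or 2 children, and let G be the graph on T with the child edges {p, p.i} together with edges linking each leaf to the next leaf in left-to-right (lexicographic frontier) order. Then tw(G) ≤ 3. -/

import Mathlib

namespace SLTW

/-- Tree positions: finite sequences of naturals. -/
abbrev Pos := List ℕ

/-- `parentOf p q` : `p` is the parent of `q`, i.e. `q = p.i`. -/
def parentOf (p q : Pos) : Prop := ∃ i : ℕ, q = p ++ [i]

/-- Adjacency in a tree: parent in either direction. -/
def adj (p q : Pos) : Prop := parentOf p q ∨ parentOf q p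

/-- A path in a tree with domain `D` from `p` to `q`: pairwise distinct positions,
consecutive ones related by the parent relation. -/
def isPath (D : Set Pos) (l : List Pos) (p q : Pos) : Prop :=
  l ≠ [] ∧ l.Chain' adj ∧ l.Nodup ∧ (∀ x ∈ l, x ∈ D) ∧ l.head? = some p ∧ l.getLast? = some q

/-- `q` lies on some path from `p` to `r` in the tree with domain `D`. -/
def onPath (D : Set Pos) (q p r : Pos) : Prop := ∃ l, isPath D l p r ∧ q ∈ l

/-- A prefix-closed set of tree positions. -/
def prefixClosed (D : Set Pos) : Prop := ∀ p q : Pos, p <+: q → q ∈ D → p ∈ D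

/-- A tree decomposition of a graph with vertex set `V` and (directed) edge set `E`. -/
structure TreeDecomp {α : Type} (V : Set α) (E : Set (α × α)) where
  dom : Set Pos
  bag : Pos → Set α
  dom_fin : dom.Finite
  dom_pc : prefixClosed dom
  cover_v : ∀ v ∈ V, ∃ p ∈ dom, v ∈ bag p
  cover_e : ∀ e ∈ E, ∃ p ∈ dom, e.1 ∈ bag p ∧ e.2 ∈ bag p
  conn : ∀ p q r, p ∈ dom → q ∈ dom → r ∈ dom → onPath dom q p r →
    bag p ∩ bag r ⊆ bag q

/-- The decomposition has width at most `w`: every bag is finite of cardinality `≤ w + 1`. -/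
def TreeDecomp.widthLE {α : Type} {V : Set α} {E : Set (α × α)}
    (t : TreeDecomp V E) (w : ℕ) : Prop :=
  ∀ p ∈ t.dom, (t.bag p).Finite ∧ (t.bag p).ncard ≤ w + 1

/-- The graph `(V, E)` has tree width at most `w`. -/
def twLE {α : Type} (V : Set α) (E : Set (α × α)) (w : ℕ) : Prop :=
  ∃ t : TreeDecomp V E, t.widthLE w

/-! ### States of Separation Logic -/

abbrev Loc := ℕ
abbrev PVar := ℕ
abbrev Sel := ℕ
abbrev Heap := Loc → Option (Sel → Option Loc)
abbrev Store := PVar → Option Loc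

structure SLState where
  store : Store
  heap : Heap

/-- Domain of the heap (allocated locations). -/
def SLState.hdom (S : SLState) : Set Loc := {l | S.heap l ≠ none}
/-- Image of the store. -/
def SLState.simg (S : SLState) : Set Loc := {l | ∃ u, S.store u = some l}
/-- Image of the heap: destinations of selector edges. -/
def SLState.hImg (S : SLState) : Set Loc :=
  {l | ∃ a f k, S.heap a = some f ∧ f k = some l}
/-- All locations of a state. -/
def SLState.locs (S : SLState) : Set Loc := S.simg ∪ S.hdom ∪ S.hImg
/-- Edges of the state, seen as a graph. -/
def SLState.edges (S : SLState) : Set (Loc × Loc) :=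
  {e | ∃ f k, S.heap e.1 = some f ∧ f k = some e.2}
/-- Tree width of a state is at most `w`. -/
def SLState.twLE (S : SLState) (w : ℕ) : Prop := SLTW.twLE S.locs S.edges w



/-! ### Syntax of basic SL formulae -/

abbrev LVar := ℕ
/-- Variables: program variables or logical variables. -/
abbrev Var := PVar ⊕ LVar

/-- Combined evaluation `s ⊕ ι` of program and logical variables. -/
def eval (s : Store) (ι : LVar → Option Loc) : Var → Option Loc
  | Sum.inl u => s u
  | Sum.inr x => ι x

inductive PureF where
  | eq (a b : Var)
  | ne (a b : Var)
  | and (p q : PureF)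

inductive SpatialF where
  | emp
  | pto (a : Var) (bs : List Var)
  | star (s₁ s₂ : SpatialF)

inductive BasicF where
  | base (p : PureF) (s : SpatialF)
  | ex (x : LVar) (f : BasicF)

/-- Number of variable occurrences in a spatial formula. -/
def SpatialF.size : SpatialF → ℕ
  | .emp => 0
  | .pto _ bs => 1 + bs.length
  | .star s₁ s₂ => s₁.size + s₂.size

/-- Size of a basic formula: variable occurrences of its spatial part. -/
def BasicF.size : BasicF → ℕ
  | .base _ s => s.size
  | .ex _ f => f.size

/-- Two heaps have disjoint domains. -/
def heapDisj (h₁ h₂ : Heap) : Prop := ∀ l, h₁ l = none ∨ h₂ l = none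

/-- Union of two heaps (left-biased, used under disjointness). -/
def heapUnion (h₁ h₂ : Heap) : Heap := fun l => (h₁ l).orElse (fun _ => h₂ l)

/-- The heap of a single allocated cell at `la` with selectors `1..n` pointing to
the evaluations of `bs` (strict semantics). -/
def ptoHeap (s : Store) (ι : LVar → Option Loc) (la : Loc) (bs : List Var) : Heap :=
  fun l => if l = la then
    some (fun k => if 1 ≤ k ∧ k ≤ bs.length then eval s ι (bs.getD (k-1) (Sum.inr 0)) else none)
  else none

def PureSat (S : SLState) (ι : LVar → Option Loc) : PureF → Prop
  | .eq a b => eval S.store ι a = eval S.store ι b ∧ eval S.store ι a ≠ none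
  | .ne a b => eval S.store ι a ≠ eval S.store ι b ∧
      eval S.store ι a ≠ none ∧ eval S.store ι b ≠ none
  | .and p q => PureSat S ι p ∧ PureSat S ι q

/-- Strict semantics of spatial formulae. -/
def SpSat (S : SLState) (ι : LVar → Option Loc) : SpatialF → Prop
  | .emp => ∀ l, S.heap l = none
  | .pto a bs => ∃ la, eval S.store ι a = some la ∧ (∀ b ∈ bs, eval S.store ι b ≠ none) ∧
      S.heap = ptoHeap S.store ι la bs
  | .star s₁ s₂ => ∃ h₁ h₂, heapDisj h₁ h₂ ∧ S.heap = heapUnion h₁ h₂ ∧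
      SpSat ⟨S.store, h₁⟩ ι s₁ ∧ SpSat ⟨S.store, h₂⟩ ι s₂

def BasicSat (S : SLState) (ι : LVar → Option Loc) : BasicF → Prop
  | .base p s => PureSat S ι p ∧ SpSat S ι s
  | .ex x f => ∃ l : Loc, BasicSat S (Function.update ι x (some l)) f

/-- Iterated separating conjunction. -/
def bigStar (l : List SpatialF) : SpatialF := l.foldr SpatialF.star SpatialF.emp


end SLTW
open SLTW in
/-- A leaf of the binary tree `T`. -/
def isLeaf (T : Set (List Bool)) (p : List Bool) : Prop := p ∈ T ∧ p ++ [false] ∉ T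


namespace TLL

abbrev Pos := List ℕ

/-- parent-adjacency on positions -/
def padj (p q : Pos) : Prop := (∃ i, q = p ++ [i]) ∨ (∃ i, p = q ++ [i])

lemma padj_symm {p q : Pos} (h : padj p q) : padj q p := h.elim .inr .inl

lemma prefix_dropLast {y x : Pos} (h : y <+: x) (hne : y ≠ x) : y <+: x.dropLast := by
  obtain ⟨t, rfl⟩ := h
  rcases List.eq_nil_or_concat t with rfl | ⟨t', a, rfl⟩
  · simp at hne
  · rw [List.concat_eq_append, ← List.append_assoc, List.dropLast_concat]
    exact (List.prefix_append _ _)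

/-- Every chain from inside the subtree of z to outside passes through z. -/
lemma cross : ∀ (l : List Pos) (p r z : Pos), l.Chain' padj → l.head? = some p →
    l.getLast? = some r → z <+: p → ¬ z <+: r → z ∈ l := by
  intro l
  induction l with
  | nil => intro p r z _ h; simp at h
  | cons a t ih =>
    intro p r z hch hh hl hzp hzr
    have hap : a = p := by simpa using hh
    subst hap
    rcases eq_or_ne z a with rfl | hza
    · exact List.mem_cons_self
    cases t with
    | nil => simp at hl; exact absurd (hl ▸ hzp) hzr
    | cons y t' =>
      have hadj : padj a y := (List.isChain_cons_cons.1 hch).1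
      have hzy : z <+: y := by
        rcases hadj with ⟨i, hy⟩ | ⟨i, ha⟩
        · exact hzp.trans (hy ▸ List.prefix_append _ _)
        · subst ha
          rcases List.prefix_concat_iff.1 hzp with h | h
          · exact absurd h hza
          · exact h
      have : z ∈ y :: t' := ih y r z (List.isChain_cons_cons.1 hch).2 rfl (by simpa using hl) hzy hzr
      exact List.mem_cons_of_mem _ this

lemma cross' (l : List Pos) (p r z : Pos) (hch : l.Chain' padj) (hh : l.head? = some p)
    (hl : l.getLast? = some r) (hzr : z <+: r) (hzp : ¬ z <+: p) : z ∈ l := by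
  have hch' : l.reverse.Chain' padj := by
    exact List.isChain_reverse.2 (List.IsChain.imp (fun a b h => padj_symm h) hch)
  have := cross l.reverse r p z hch' (by rwa [List.head?_reverse]) (by rwa [List.getLast?_reverse]) hzr hzp
  simpa using this

/-- a "tuft": set whose elements all reduce to apex by dropLast steps within the set -/
def Tuft (S : Set Pos) (a : Pos) : Prop :=
  ∀ x ∈ S, x = a ∨ (x ≠ [] ∧ x.dropLast ∈ S)

lemma Tuft.apex_prefix {S : Set Pos} {a : Pos} (h : Tuft S a) :
    ∀ x ∈ S, a <+: x := by
  intro x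
  induction x using List.reverseRecOn with
  | nil =>
    intro hx
    rcases h [] hx with rfl | ⟨hne, _⟩
    · exact List.prefix_refl _
    · simp at hne
  | append_singleton L b ih =>
    intro hx
    rcases h _ hx with rfl | ⟨hne, hd⟩
    · exact List.prefix_refl _
    · rw [List.dropLast_concat] at hd
      exact (ih hd).trans (List.prefix_append _ _)

lemma Tuft.between {S : Set Pos} {a : Pos} (h : Tuft S a) :
    ∀ x ∈ S, ∀ y, a <+: y → y <+: x → y ∈ S := by
  intro x
  induction x using List.reverseRecOn with
  | nil =>
    intro hx y _ hyx
    rwa [List.prefix_nil.1 hyx]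
  | append_singleton L b ih =>
    intro hx y hay hyx
    rcases eq_or_ne y (L ++ [b]) with rfl | hne
    · exact hx
    rcases h _ hx with heq | ⟨hxe, hd⟩
    · exact absurd (hyx.eq_of_length (le_antisymm hyx.length_le (heq ▸ hay).length_le)) hne
    · rw [List.dropLast_concat] at hd
      exact ih hd y hay (by simpa [List.dropLast_concat] using prefix_dropLast hyx hne)


lemma tuft_path {S : Set Pos} {a : Pos} (hT : Tuft S a) (l : List Pos) (p r q : Pos)
    (hch : l.Chain' padj) (hnd : l.Nodup) (hh : l.head? = some p) (hl : l.getLast? = some r)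
    (hp : p ∈ S) (hr : r ∈ S) (hq : q ∈ l) : q ∈ S := by
  classical
  rcases eq_or_ne q p with rfl | hqp'
  · exact hp
  rcases eq_or_ne q r with rfl | hqr'
  · exact hr
  obtain ⟨s, t, rfl⟩ := List.append_of_mem hq
  rcases s.eq_nil_or_concat with rfl | ⟨s₀, x, hs⟩
  · simp at hh; exact absurd (by simpa using hh : q = p) hqp'
  have hsne : s ≠ [] := by rw [hs]; simp
  rcases t.eq_nil_or_concat with rfl | ht'
  · rw [List.getLast?_concat] at hl
    exact absurd (by simpa using hl : q = r) hqr'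
  have htne : t ≠ [] := by rcases ht' with ⟨t₀, y, rfl⟩; simp
  have hch1 : (s ++ [q]).Chain' padj := (List.isChain_split.1 hch).1
  have hch2 : (q :: t).Chain' padj := (List.isChain_split.1 hch).2
  have hnd' := List.nodup_append.1 hnd
  have hdisj : s.Disjoint (q :: t) := fun {_} ha hb => hnd'.2.2 _ ha _ hb rfl
  have hqns : q ∉ s := fun h => hdisj h (List.mem_cons_self)
  have hhs : s.head? = some p := by
    cases s with
    | nil => exact absurd rfl hsne
    | cons a' s' => simpa using hh
  have hhsq : (s ++ [q]).head? = some p := by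
    cases s with
    | nil => exact absurd rfl hsne
    | cons a' s' => simpa using hh
  have hls : (s ++ [q]).getLast? = some q := List.getLast?_concat
  have hht : (q :: t).head? = some q := rfl
  have hlt : (q :: t).getLast? = some r := by
    rw [← hl, List.getLast?_append_cons]
  have hap : a <+: p := hT.apex_prefix p hp
  have har : a <+: r := hT.apex_prefix r hr
  have haq : a <+: q := by
    by_contra hnaq
    have ha1 : a ∈ s ++ [q] := cross _ p q a hch1 hhsq hls hap hnaq
    have ha2 : a ∈ q :: t := cross' _ q r a hch2 hht hlt har hnaq
    have hane : a ≠ q := fun h => hnaq (h ▸ List.prefix_refl _)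
    have ha1' : a ∈ s := by
      rcases List.mem_append.1 ha1 with h | h
      · exact h
      · simp at h; exact absurd h hane
    exact absurd (hdisj ha1' ha2) (fun h => h)
  have hqpr : q <+: p ∨ q <+: r := by
    by_contra hn
    push_neg at hn
    obtain ⟨hn1, hn2⟩ := hn
    obtain ⟨y, t', rfl⟩ : ∃ y t', t = y :: t' := by
      cases t with
      | nil => exact absurd rfl htne
      | cons y t' => exact ⟨y, t', rfl⟩
    have hcht : (y :: t').Chain' padj := (List.isChain_cons_cons.1 hch2).2
    have hndqt := List.nodup_cons.1 hnd'.2.1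
    have hadjqy : padj q y := (List.isChain_cons_cons.1 hch2).1
    obtain ⟨i, hqy⟩ : ∃ i, q = y ++ [i] := by
      rcases hadjqy with ⟨j, hy⟩ | h
      · exfalso
        have : q ∈ y :: t' :=
          cross _ y r q hcht rfl (by simpa using hlt) (hy ▸ List.prefix_append _ _) hn2
        exact hndqt.1 this
      · exact h
    have hchs : s.Chain' padj := (List.isChain_append.1 hch1).1
    have hlsx : s.getLast? = some x := by
      rw [hs, List.concat_eq_append, List.getLast?_concat]
    have hadjxq : padj x q := by
      have h3 := (List.isChain_append.1 hch1).2.2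
      exact h3 x hlsx q rfl
    obtain ⟨j, hqx⟩ : ∃ j, q = x ++ [j] := by
      rcases hadjxq with h | ⟨j, hx⟩
      · exact h
      · exfalso
        have : q ∈ s := cross' _ p x q hchs hhs hlsx (hx ▸ List.prefix_append _ _) hn1
        exact hqns this
    have hxy : x = y := by
      have hxyj : x ++ [j] = y ++ [i] := hqx ▸ hqy
      have := congrArg List.dropLast hxyj
      simpa [List.dropLast_concat] using this
    have hxs : x ∈ s := by rw [hs]; simp [List.concat_eq_append]
    have hyt : y ∈ q :: y :: t' := by simp
    exact (hdisj (hxy ▸ hxs) hyt : False)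
  rcases hqpr with h | h
  · exact hT.between p hp q haq h
  · exact hT.between r hr q haq h


lemma bool_lt : (false : Bool) < true := by decide

lemma lexApp : ∀ (c : List Bool) (s t : List Bool),
    List.Lex (· < ·) (c ++ false :: s) (c ++ true :: t)
  | [], s, t => List.Lex.rel bool_lt
  | a :: c, s, t => List.Lex.cons (lexApp c s t)

lemma lexSplit {x y : List Bool} (h : List.Lex (· < ·) x y) :
    x <+: y ∨ ∃ c s t, x = c ++ false :: s ∧ y = c ++ true :: t := by
  induction h with
  | nil => exact Or.inl (List.nil_prefix)
  | @rel a l₁ b l₂ hab =>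
    have : a = false ∧ b = true := by revert hab; cases a <;> cases b <;> decide
    exact Or.inr ⟨[], l₁, l₂, by simp [this.1], by simp [this.2]⟩
  | @cons a l₁ l₂ h ih =>
    rcases ih with h' | ⟨c, s, t, rfl, rfl⟩
    · exact Or.inl (List.cons_prefix_cons.mpr ⟨rfl, h'⟩)
    · exact Or.inr ⟨a :: c, s, t, rfl, rfl⟩

lemma lexIrrefl : ∀ x : List Bool, ¬ List.Lex (· < ·) x x := by
  intro x
  induction x with
  | nil => intro h; cases h
  | cons a l ih =>
    intro h
    cases h with
    | rel h => exact lt_irrefl _ h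
    | cons h => exact ih h

lemma lexAsymm : ∀ {x y : List Bool}, List.Lex (· < ·) x y → List.Lex (· < ·) y x → False := by
  intro x y h
  induction h with
  | nil => intro h2; cases h2
  | rel hab =>
    intro h2
    cases h2 with
    | rel hba => exact absurd hab (lt_asymm hba)
    | cons _ => exact absurd hab (lt_irrefl _)
  | cons h ih =>
    intro h2
    cases h2 with
    | rel hba => exact absurd hba (lt_irrefl _)
    | cons h2' => exact ih h2'

lemma lexTotal : ∀ x y : List Bool, List.Lex (· < ·) x y ∨ x = y ∨ List.Lex (· < ·) y x := by
  intro x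
  induction x with
  | nil => intro y; cases y with
    | nil => exact Or.inr (Or.inl rfl)
    | cons b m => exact Or.inl List.Lex.nil
  | cons a l ih =>
    intro y
    cases y with
    | nil => exact Or.inr (Or.inr List.Lex.nil)
    | cons b m =>
      rcases lt_trichotomy a b with h | rfl | h
      · exact Or.inl (List.Lex.rel h)
      · rcases ih m with h | rfl | h
        · exact Or.inl (List.Lex.cons h)
        · exact Or.inr (Or.inl rfl)
        · exact Or.inr (Or.inr (List.Lex.cons h))
      · exact Or.inr (Or.inr (List.Lex.rel h))

lemma bool_ne_not (b : Bool) : b ≠ !b := by cases b <;> decide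

lemma trail {b : Bool} : ∀ (j : ℕ) (x s : List Bool) (n : ℕ),
    (s = [] ∨ s.getLast? = some (!b)) → x ++ List.replicate j b = s ++ List.replicate n b →
    j ≤ n ∧ x = s ++ List.replicate (n - j) b := by
  intro j
  induction j with
  | zero => intro x s n _ h; simpa using h
  | succ j ih =>
    intro x s n hs h
    rw [List.replicate_succ, ← List.singleton_append, ← List.append_assoc] at h
    obtain ⟨hjn, hx⟩ := ih (x ++ [b]) s n hs h
    rcases Nat.eq_zero_or_pos (n - j) with hz | hpos
    · rw [hz] at hx; simp at hx
      exfalso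
      rcases hs with rfl | hs
      · simp at hx
      · rw [← hx, List.getLast?_concat] at hs
        exact bool_ne_not b (by injection hs)
    · obtain ⟨m, hm⟩ : ∃ m, n - j = m + 1 := ⟨n - j - 1, by omega⟩
      rw [hm, List.replicate_succ', ← List.append_assoc] at hx
      have hx' := List.append_cancel_right hx
      exact ⟨by omega, by rw [hx']; congr 1; congr 1; omega⟩

lemma canon (b : Bool) (u : List Bool) :
    ∃ s n, u = s ++ List.replicate n b ∧ (s = [] ∨ s.getLast? = some (!b)) := by
  induction u using List.reverseRecOn with
  | nil => exact ⟨[], 0, by simp, Or.inl rfl⟩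
  | append_singleton u c ih =>
    obtain ⟨s, n, rfl, hs⟩ := ih
    rcases eq_or_ne c b with rfl | hcb
    · exact ⟨s, n + 1, by rw [List.replicate_succ', ← List.append_assoc], hs⟩
    · have hc : c = !b := by revert hcb; cases c <;> cases b <;> decide
      refine ⟨s ++ List.replicate n b ++ [c], 0, by simp, Or.inr ?_⟩
      rw [List.getLast?_concat, hc]

def code (b : Bool) : List ℕ := if b then [1,0,0] else [0,0]

def enc (v : List Bool) : List ℕ := v.flatMap code

@[simp] lemma enc_nil : enc [] = [] := rfl

lemma enc_append (x y : List Bool) : enc (x ++ y) = enc x ++ enc y :=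
  List.flatMap_append

lemma enc_concat (v : List Bool) (b : Bool) : enc (v ++ [b]) = enc v ++ code b := by
  rw [enc_append]; simp [enc]

lemma enc_ne_nil {v : List Bool} (h : v ≠ []) : enc v ≠ [] := by
  cases v with
  | nil => exact absurd rfl h
  | cons b v' => cases b <;> simp [enc, code]

lemma enc_inj : ∀ v w : List Bool, enc v = enc w → v = w
  | [], [], _ => rfl
  | [], b :: w, h => by cases b <;> simp [enc, code] at h
  | b :: v, [], h => by cases b <;> simp [enc, code] at h
  | b :: v, c :: w, h => by
    cases b <;> cases c <;> simp [enc, code] at h <;>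
      exact congrArg _ (enc_inj v w h)

lemma enc_ne_shift : ∀ (v w : List Bool) (s : List ℕ),
    (s = [0] ∨ s = [1] ∨ s = [1,0]) → enc v ≠ enc w ++ s
  | [], w, s, hs => by
    intro h
    rcases hs with rfl | rfl | rfl <;> simp [enc] at h
  | b :: v, [], s, hs => by
    intro h
    rcases hs with rfl | rfl | rfl <;> cases b <;> simp [enc, code] at h
  | b :: v, c :: w, s, hs => by
    intro h
    cases b <;> cases c <;> simp [enc, code] at h <;>
      exact enc_ne_shift v w s hs h


lemma concat_inj {α : Type*} {x y : List α} {a b : α} (h : x ++ [a] = y ++ [b]) :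
    x = y ∧ a = b := by
  obtain ⟨h1, h2⟩ := List.append_inj' h rfl
  exact ⟨h1, by injection h2⟩

lemma enc_cons (b : Bool) (v : List Bool) : enc (b :: v) = code b ++ enc v := rfl

lemma prefix_split {α : Type*} {p a c : List α} (h : p <+: a ++ c) :
    p <+: a ∨ ∃ p', p = a ++ p' ∧ p' <+: c := by
  rcases List.prefix_or_prefix_of_prefix h (List.prefix_append a c) with h1 | h1
  · exact Or.inl h1
  · obtain ⟨p', rfl⟩ := h1
    refine Or.inr ⟨p', rfl, ?_⟩
    obtain ⟨t, ht⟩ := h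
    exact ⟨t, List.append_cancel_left (by rw [← List.append_assoc, ht])⟩

lemma prefix_pair {α : Type*} {p : List α} {x y : α} (h : p <+: [x, y]) :
    p = [] ∨ p = [x] ∨ p = [x, y] := by
  rcases p with _ | ⟨a, p⟩
  · exact Or.inl rfl
  rcases p with _ | ⟨b, p⟩
  · simp only [List.cons_prefix_cons, List.nil_prefix, and_true] at h
    exact Or.inr (Or.inl (by rw [h]))
  rcases p with _ | ⟨c, p⟩
  · simp only [List.cons_prefix_cons, List.nil_prefix, and_true] at h
    exact Or.inr (Or.inr (by rw [h.1, h.2]))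
  · simp only [List.cons_prefix_cons, List.prefix_nil] at h
    simp at h

lemma prefix_triple {α : Type*} {p : List α} {x y z : α} (h : p <+: [x, y, z]) :
    p = [] ∨ p = [x] ∨ p = [x, y] ∨ p = [x, y, z] := by
  rcases p with _ | ⟨a, p⟩
  · exact Or.inl rfl
  have h' := List.cons_prefix_cons.1 h
  rcases prefix_pair h'.2 with rfl | rfl | rfl
  · exact Or.inr (Or.inl (by rw [h'.1]))
  · exact Or.inr (Or.inr (Or.inl (by rw [h'.1])))
  · exact Or.inr (Or.inr (Or.inr (by rw [h'.1])))

lemma prefix_enc : ∀ (v : List Bool) (p : List ℕ), p <+: enc v →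
    (∃ w, w <+: v ∧ p = enc w) ∨
    (∃ w b, w ++ [b] <+: v ∧ ((p = enc w ++ [0] ∧ b = false) ∨
      ((p = enc w ++ [1] ∨ p = enc w ++ [1,0]) ∧ b = true))) := by
  intro v
  induction v with
  | nil =>
    intro p hp
    left
    exact ⟨[], List.prefix_refl _, List.prefix_nil.1 (show p <+: [] from hp)⟩
  | cons b v' ih =>
    intro p hp
    rw [enc_cons] at hp
    rcases prefix_split hp with hp1 | ⟨p', rfl, hp2⟩
    · cases b
      · rcases prefix_pair (p := p) (by simpa [code] using hp1) with rfl | rfl | rfl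
        · exact Or.inl ⟨[], List.nil_prefix, rfl⟩
        · exact Or.inr ⟨[], false, List.cons_prefix_cons.2 ⟨rfl, List.nil_prefix⟩,
            Or.inl ⟨rfl, rfl⟩⟩
        · exact Or.inl ⟨[false], List.cons_prefix_cons.2 ⟨rfl, List.nil_prefix⟩, rfl⟩
      · rcases prefix_triple (p := p) (by simpa [code] using hp1) with rfl | rfl | rfl | rfl
        · exact Or.inl ⟨[], List.nil_prefix, rfl⟩
        · exact Or.inr ⟨[], true, List.cons_prefix_cons.2 ⟨rfl, List.nil_prefix⟩,
            Or.inr ⟨Or.inl rfl, rfl⟩⟩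
        · exact Or.inr ⟨[], true, List.cons_prefix_cons.2 ⟨rfl, List.nil_prefix⟩,
            Or.inr ⟨Or.inr rfl, rfl⟩⟩
        · exact Or.inl ⟨[true], List.cons_prefix_cons.2 ⟨rfl, List.nil_prefix⟩, rfl⟩
    · rcases ih p' hp2 with ⟨w, hwv, rfl⟩ | ⟨w, b', hwb, hforms⟩
      · exact Or.inl ⟨b :: w, List.cons_prefix_cons.2 ⟨rfl, hwv⟩, rfl⟩
      · refine Or.inr ⟨b :: w, b', List.cons_prefix_cons.2 ⟨rfl, hwb⟩, ?_⟩
        rcases hforms with ⟨rfl, rfl⟩ | ⟨h1, rfl⟩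
        · exact Or.inl ⟨by rw [enc_cons, List.append_assoc], rfl⟩
        · rcases h1 with rfl | rfl
          · exact Or.inr ⟨Or.inl (by rw [enc_cons, List.append_assoc]), rfl⟩
          · exact Or.inr ⟨Or.inr (by rw [enc_cons, List.append_assoc]), rfl⟩


def IsR (T : Set (List Bool)) (v x : List Bool) : Prop :=
  (∃ k, x = v ++ List.replicate k true) ∧ isLeaf T x
def IsL (T : Set (List Bool)) (v x : List Bool) : Prop :=
  (∃ k, x = v ++ List.replicate k false) ∧ isLeaf T x
def Cb (T : Set (List Bool)) (v : List Bool) : Set (List Bool) :=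
  {x | x = v ∨ IsL T v x ∨ IsR T v x ∨ IsR T (v ++ [false]) x}
def Mb (T : Set (List Bool)) (v : List Bool) : Set (List Bool) :=
  {x | x = v ∨ x = v ++ [false] ∨ IsL T (v ++ [false]) x ∨ IsR T (v ++ [false]) x}
def Eb (T : Set (List Bool)) (v : List Bool) : Set (List Bool) :=
  {x | x = v ∨ IsR T v x ∨ IsR T (v ++ [false]) x ∨ IsL T (v ++ [true]) x}
def M'b (T : Set (List Bool)) (v : List Bool) : Set (List Bool) :=
  {x | x = v ∨ x = v ++ [true] ∨ IsL T (v ++ [true]) x ∨ IsR T (v ++ [true]) x}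
def Bdom (T : Set (List Bool)) : Set (List ℕ) :=
  {p | ∃ v ∈ T, p = enc v ∨ (v ++ [false] ∈ T ∧
    (p = enc v ++ [0] ∨ p = enc v ++ [1] ∨ p = enc v ++ [1,0]))}
def Bbag (T : Set (List Bool)) (p : List ℕ) : Set (List Bool) :=
  {x | ∃ v ∈ T, (p = enc v ∧ x ∈ Cb T v) ∨ (v ++ [false] ∈ T ∧
    ((p = enc v ++ [0] ∧ x ∈ Mb T v) ∨ (p = enc v ++ [1] ∧ x ∈ Eb T v) ∨
     (p = enc v ++ [1,0] ∧ x ∈ M'b T v)))}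

section TreeT
variable {T : Set (List Bool)} (hfin : T.Finite)
  (hpc : ∀ p q : List Bool, p <+: q → q ∈ T → p ∈ T)
  (hfull : ∀ p ∈ T, (p ++ [false] ∈ T ↔ p ++ [true] ∈ T))

include hpc in
lemma IsR.base_mem (h : IsR T v x) : v ∈ T := by
  obtain ⟨⟨k, rfl⟩, hx, _⟩ := h
  exact hpc _ _ (List.prefix_append _ _) hx

include hpc in
lemma IsL.base_mem (h : IsL T v x) : v ∈ T := by
  obtain ⟨⟨k, rfl⟩, hx, _⟩ := h
  exact hpc _ _ (List.prefix_append _ _) hx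

include hpc hfull in
lemma leaf_no_desc (hv : isLeaf T v) (hvx : v <+: x) (hx : x ∈ T) : x = v := by
  obtain ⟨t, rfl⟩ := hvx
  cases t with
  | nil => simp
  | cons b t' =>
    exfalso
    have hb : v ++ [b] ∈ T := hpc _ _ ⟨t', by simp⟩ hx
    cases b
    · exact hv.2 hb
    · exact hv.2 ((hfull v hv.1).mpr hb)

include hpc hfull in
lemma leaf_not_true (hv : isLeaf T v) : v ++ [true] ∉ T :=
  fun h => hv.2 ((hfull v hv.1).mpr h)

include hfin hfull in
lemma R_exists (hv : v ∈ T) : ∃ n, isLeaf T (v ++ List.replicate n true) := by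
  classical
  obtain ⟨N, hN⟩ : ∃ N, ∀ x ∈ T, x.length ≤ N := by
    obtain ⟨N, hN⟩ := (hfin.image List.length).bddAbove
    exact ⟨N, fun x hx => hN (Set.mem_image_of_mem _ hx)⟩
  have hP : ∃ k, v ++ List.replicate k true ∉ T := by
    refine ⟨N + 1, fun h => ?_⟩
    have := hN _ h
    simp at this
    omega
  haveI : DecidablePred fun k => v ++ List.replicate k true ∉ T := Classical.decPred _
  set K := Nat.find hP with hK
  have hKpos : 0 < K := by
    rcases Nat.eq_zero_or_pos K with h0 | h; swap; exact h
    exfalso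
    have := Nat.find_spec hP
    rw [← hK, h0] at this
    simp at this
    exact this hv
  refine ⟨K - 1, ?_, ?_⟩
  · have := Nat.find_min hP (show K - 1 < K by omega)
    simpa using this
  · intro hc
    have htrue : v ++ List.replicate (K - 1) true ++ [true] ∈ T :=
      (hfull _ (by have := Nat.find_min hP (show K - 1 < K by omega); simpa using this)).mp hc
    have : v ++ List.replicate K true ∈ T := by
      rw [show K = (K-1) + 1 by omega, List.replicate_succ', ← List.append_assoc]
      exact htrue
    exact Nat.find_spec hP this

include hfin in
lemma L_exists (hv : v ∈ T) : ∃ n, isLeaf T (v ++ List.replicate n false) := by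
  classical
  obtain ⟨N, hN⟩ : ∃ N, ∀ x ∈ T, x.length ≤ N := by
    obtain ⟨N, hN⟩ := (hfin.image List.length).bddAbove
    exact ⟨N, fun x hx => hN (Set.mem_image_of_mem _ hx)⟩
  have hP : ∃ k, v ++ List.replicate k false ∉ T := by
    refine ⟨N + 1, fun h => ?_⟩
    have := hN _ h
    simp at this
    omega
  haveI : DecidablePred fun k => v ++ List.replicate k false ∉ T := Classical.decPred _
  set K := Nat.find hP with hK
  have hKpos : 0 < K := by
    rcases Nat.eq_zero_or_pos K with h0 | h; swap; exact h
    exfalso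
    have := Nat.find_spec hP
    rw [← hK, h0] at this
    simp at this
    exact this hv
  refine ⟨K - 1, ?_, ?_⟩
  · have := Nat.find_min hP (show K - 1 < K by omega)
    simpa using this
  · intro hc
    have : v ++ List.replicate K false ∈ T := by
      rw [show K = (K-1) + 1 by omega, List.replicate_succ', ← List.append_assoc]
      exact hc
    exact Nat.find_spec hP this

lemma rep_prefix (v : List Bool) (b : Bool) {k j : ℕ} (h : k ≤ j) :
    v ++ List.replicate k b <+: v ++ List.replicate j b := by
  refine ⟨List.replicate (j - k) b, ?_⟩
  rw [List.append_assoc, ← List.replicate_add]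
  congr 2
  omega

include hpc hfull in
lemma IsR_sub {v x y : List Bool} (h1 : IsR T v x) (h2 : IsR T v y) : x = y := by
  obtain ⟨⟨k, rfl⟩, hx⟩ := h1
  obtain ⟨⟨j, rfl⟩, hy⟩ := h2
  rcases le_total k j with h | h
  · exact (leaf_no_desc hpc hfull hx (rep_prefix v true h) hy.1).symm
  · exact leaf_no_desc hpc hfull hy (rep_prefix v true h) hx.1

include hpc hfull in
lemma IsL_sub {v x y : List Bool} (h1 : IsL T v x) (h2 : IsL T v y) : x = y := by
  obtain ⟨⟨k, rfl⟩, hx⟩ := h1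
  obtain ⟨⟨j, rfl⟩, hy⟩ := h2
  rcases le_total k j with h | h
  · exact (leaf_no_desc hpc hfull hx (rep_prefix v false h) hy.1).symm
  · exact leaf_no_desc hpc hfull hy (rep_prefix v false h) hx.1

include hpc hfull in
lemma maxR : ∀ (n : ℕ) (v x : List Bool), isLeaf T x → v <+: x →
    isLeaf T (v ++ List.replicate n true) →
    x = v ++ List.replicate n true ∨ List.Lex (· < ·) x (v ++ List.replicate n true) := by
  intro n
  induction n with
  | zero =>
    intro v x hx hvx hr
    simp only [List.replicate, List.append_nil] at hr ⊢
    exact Or.inl (leaf_no_desc hpc hfull hr hvx hx.1)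
  | succ n ih =>
    intro v x hx hvx hr
    have hrT : v ++ List.replicate (n+1) true ∈ T := hr.1
    have hvt : v ++ [true] ∈ T :=
      hpc _ _ ⟨List.replicate n true, by rw [List.append_assoc]; rfl⟩ hrT
    obtain ⟨t, rfl⟩ := hvx
    cases t with
    | nil =>
      exfalso
      rw [List.append_nil] at hx
      exact hx.2 ((hfull v hx.1).mpr hvt)
    | cons b t' =>
      cases b
      · refine Or.inr ?_
        rw [show v ++ List.replicate (n+1) true = v ++ true :: List.replicate n true from rfl]
        exact lexApp v t' (List.replicate n true)
      · have hr' : isLeaf T ((v ++ [true]) ++ List.replicate n true) := by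
          rwa [List.append_assoc, List.singleton_append]
        have hx' : (v ++ [true]) <+: v ++ true :: t' := ⟨t', by simp⟩
        rcases ih (v ++ [true]) (v ++ true :: t') hx hx' hr' with h | h
        · left; rw [h, List.append_assoc]; rfl
        · right; rwa [List.append_assoc, List.singleton_append] at h

include hpc hfull in
lemma minL : ∀ (n : ℕ) (v x : List Bool), isLeaf T x → v <+: x →
    isLeaf T (v ++ List.replicate n false) →
    x = v ++ List.replicate n false ∨ List.Lex (· < ·) (v ++ List.replicate n false) x := by
  intro n
  induction n with
  | zero =>
    intro v x hx hvx hr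
    simp only [List.replicate, List.append_nil] at hr ⊢
    exact Or.inl (leaf_no_desc hpc hfull hr hvx hx.1)
  | succ n ih =>
    intro v x hx hvx hr
    have hrT : v ++ List.replicate (n+1) false ∈ T := hr.1
    have hvt : v ++ [false] ∈ T :=
      hpc _ _ ⟨List.replicate n false, by rw [List.append_assoc]; rfl⟩ hrT
    obtain ⟨t, rfl⟩ := hvx
    cases t with
    | nil =>
      exfalso
      rw [List.append_nil] at hx
      exact hx.2 hvt
    | cons b t' =>
      cases b
      · have hr' : isLeaf T ((v ++ [false]) ++ List.replicate n false) := by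
          rwa [List.append_assoc, List.singleton_append]
        have hx' : (v ++ [false]) <+: v ++ false :: t' := ⟨t', by simp⟩
        rcases ih (v ++ [false]) (v ++ false :: t') hx hx' hr' with h | h
        · left; rw [h, List.append_assoc]; rfl
        · right; rwa [List.append_assoc, List.singleton_append] at h
      · refine Or.inr ?_
        rw [show v ++ List.replicate (n+1) false = v ++ false :: List.replicate n false from rfl]
        exact lexApp v (List.replicate n false) t'

include hfin hpc hfull in
lemma consec {ℓ ℓ' : List Bool} (hℓ : isLeaf T ℓ) (hℓ' : isLeaf T ℓ')
    (hlex : List.Lex (· < ·) ℓ ℓ')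
    (hbet : ¬ ∃ r, isLeaf T r ∧ List.Lex (· < ·) ℓ r ∧ List.Lex (· < ·) r ℓ') :
    ∃ q, q ++ [false] ∈ T ∧ IsR T (q ++ [false]) ℓ ∧ IsL T (q ++ [true]) ℓ' := by
  rcases lexSplit hlex with hpre | ⟨c, s, t, rfl, rfl⟩
  · exfalso
    have heq := leaf_no_desc hpc hfull hℓ hpre hℓ'.1
    exact lexIrrefl ℓ (heq ▸ hlex)
  · have hcf : c ++ [false] ∈ T := hpc _ _ ⟨s, by simp⟩ hℓ.1
    have hct : c ++ [true] ∈ T := hpc _ _ ⟨t, by simp⟩ hℓ'.1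
    refine ⟨c, hcf, ?_, ?_⟩
    · obtain ⟨n, hn⟩ := R_exists hfin hfull hcf
      rcases maxR hpc hfull n (c ++ [false]) _ hℓ ⟨s, by simp⟩ hn with h | h
      · exact ⟨⟨n, h⟩, hℓ⟩
      · exfalso
        refine hbet ⟨c ++ [false] ++ List.replicate n true, hn, h, ?_⟩
        rw [List.append_assoc, List.singleton_append]
        exact lexApp c _ t
    · obtain ⟨m, hm⟩ := L_exists hfin hct
      rcases minL hpc hfull m (c ++ [true]) _ hℓ' ⟨t, by simp⟩ hm with h | h
      · exact ⟨⟨m, h⟩, hℓ'⟩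
      · exfalso
        refine hbet ⟨c ++ [true] ++ List.replicate m false, hm, ?_, h⟩
        rw [List.append_assoc, List.singleton_append]
        exact lexApp c s _


include hpc hfull in
lemma int_of_true {v : List Bool} (h : v ++ [true] ∈ T) : v ++ [false] ∈ T :=
  (hfull v (hpc _ _ (List.prefix_append _ _) h)).mpr h

-- bag intro
lemma mem_bag_c {v x : List Bool} (hv : v ∈ T) (hx : x ∈ Cb T v) : x ∈ Bbag T (enc v) :=
  ⟨v, hv, Or.inl ⟨rfl, hx⟩⟩
lemma mem_bag_m {v x : List Bool} (hv : v ∈ T) (hint : v ++ [false] ∈ T) (hx : x ∈ Mb T v) :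
    x ∈ Bbag T (enc v ++ [0]) :=
  ⟨v, hv, Or.inr ⟨hint, Or.inl ⟨rfl, hx⟩⟩⟩
lemma mem_bag_e {v x : List Bool} (hv : v ∈ T) (hint : v ++ [false] ∈ T) (hx : x ∈ Eb T v) :
    x ∈ Bbag T (enc v ++ [1]) :=
  ⟨v, hv, Or.inr ⟨hint, Or.inr (Or.inl ⟨rfl, hx⟩)⟩⟩
lemma mem_bag_m' {v x : List Bool} (hv : v ∈ T) (hint : v ++ [false] ∈ T) (hx : x ∈ M'b T v) :
    x ∈ Bbag T (enc v ++ [1,0]) :=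
  ⟨v, hv, Or.inr ⟨hint, Or.inr (Or.inr ⟨rfl, hx⟩)⟩⟩

-- dropLast computations
lemma dl_c0 (v : List Bool) : (enc (v ++ [false])).dropLast = enc v ++ [0] := by
  rw [enc_concat]
  show (enc v ++ ([0] ++ [0])).dropLast = enc v ++ [0]
  rw [← List.append_assoc, List.dropLast_concat]
lemma dl_c1 (v : List Bool) : (enc (v ++ [true])).dropLast = enc v ++ [1,0] := by
  rw [enc_concat]
  show (enc v ++ ([1,0] ++ [0])).dropLast = enc v ++ [1,0]
  rw [← List.append_assoc, List.dropLast_concat]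
lemma dl_s (p : List ℕ) (i : ℕ) : (p ++ [i]).dropLast = p := List.dropLast_concat ..
lemma dl_m' (p : List ℕ) : (p ++ [1,0]).dropLast = p ++ [1] := by
  show (p ++ ([1] ++ [0])).dropLast = p ++ [1]
  rw [← List.append_assoc, List.dropLast_concat]

lemma rep_concat (v : List Bool) (b : Bool) (k : ℕ) :
    v ++ List.replicate (k+1) b = (v ++ List.replicate k b) ++ [b] := by
  rw [List.replicate_succ', ← List.append_assoc]

lemma rep_shift (v : List Bool) (b : Bool) (k : ℕ) :
    (v ++ [b]) ++ List.replicate k b = v ++ List.replicate (k+1) b := by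
  rw [List.replicate_succ, List.append_assoc]; rfl

lemma ends_clash {u y z : List Bool} (h1 : u = y ++ [true]) (h2 : u = z ++ [false]) : False := by
  have : (y ++ [true]).getLast? = (z ++ [false]).getLast? := by rw [← h1, ← h2]
  rw [List.getLast?_concat, List.getLast?_concat] at this
  exact Bool.noConfusion (Option.some.inj this)


include hfull in
lemma bag_mem_T {u : List Bool} {p : List ℕ} (h : u ∈ Bbag T p) : u ∈ T := by
  obtain ⟨v, hvT, hc⟩ := h
  rcases hc with ⟨_, hx⟩ | ⟨hint, hc2⟩
  · rcases hx with rfl | h | h | h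
    exacts [hvT, h.2.1, h.2.1, h.2.1]
  · rcases hc2 with ⟨_, hx⟩ | ⟨_, hx⟩ | ⟨_, hx⟩
    · rcases hx with rfl | rfl | h | h
      exacts [hvT, hint, h.2.1, h.2.1]
    · rcases hx with rfl | h | h | h
      exacts [hvT, h.2.1, h.2.1, h.2.1]
    · rcases hx with rfl | rfl | h | h
      exacts [hvT, (hfull v hvT).mp hint, h.2.1, h.2.1]

lemma eq_concat_of_getLast? {α : Type*} {l : List α} {a : α} (h : l.getLast? = some a) :
    ∃ t, l = t ++ [a] := by
  rcases l.eq_nil_or_concat with rfl | ⟨t, c, rfl⟩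
  · simp at h
  · rw [List.concat_eq_append, List.getLast?_concat] at h
    exact ⟨t, by rw [List.concat_eq_append, Option.some.inj h]⟩

include hpc hfull in
theorem region_tuft (u : List Bool) : ∃ a, Tuft {p | u ∈ Bbag T p} a := by
  classical
  by_cases hex : ∃ p, u ∈ Bbag T p
  swap
  · exact ⟨[], fun x hx => absurd ⟨x, hx⟩ hex⟩
  obtain ⟨p₀, hp₀⟩ := hex
  have huT : u ∈ T := bag_mem_T hfull hp₀
  by_cases hInt : u ++ [false] ∈ T
  · -- ============ internal vertex ============
    have step : ∀ p, u ∈ Bbag T p →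
        (p = enc u) ∨ (∃ w b, u = w ++ [b] ∧ p = enc w ++ (cond b [1,0] [0])) ∨
        (p ≠ [] ∧ u ∈ Bbag T p.dropLast) := by
      intro p hp
      obtain ⟨v, hvT, hc⟩ := hp
      rcases hc with ⟨hpe, hx⟩ | ⟨hint, hc2⟩
      · rcases hx with heq | hL | hR | hR0
        · exact Or.inl (heq ▸ hpe)
        · exact absurd hInt hL.2.2
        · exact absurd hInt hR.2.2
        · exact absurd hInt hR0.2.2
      · rcases hc2 with ⟨hpe, hx⟩ | ⟨hpe, hx⟩ | ⟨hpe, hx⟩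
        · rcases hx with heq | heq | hL | hR
          · subst heq
            refine Or.inr (Or.inr ⟨by simp [hpe], ?_⟩)
            rw [hpe, dl_s]
            exact mem_bag_c hvT (Or.inl rfl)
          · exact Or.inr (Or.inl ⟨v, false, heq, hpe⟩)
          · exact absurd hInt hL.2.2
          · exact absurd hInt hR.2.2
        · rcases hx with heq | hR | hR0 | hL
          · subst heq
            refine Or.inr (Or.inr ⟨by simp [hpe], ?_⟩)
            rw [hpe, dl_s]
            exact mem_bag_c hvT (Or.inl rfl)
          · exact absurd hInt hR.2.2
          · exact absurd hInt hR0.2.2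
          · exact absurd hInt hL.2.2
        · rcases hx with heq | heq | hL | hR
          · subst heq
            refine Or.inr (Or.inr ⟨by simp [hpe], ?_⟩)
            rw [hpe, dl_m']
            exact mem_bag_e hvT hint (Or.inl rfl)
          · exact Or.inr (Or.inl ⟨v, true, heq, hpe⟩)
          · exact absurd hInt hL.2.2
          · exact absurd hInt hR.2.2
    rcases u.eq_nil_or_concat with rfl | ⟨w, b, hub⟩
    · refine ⟨[], fun p hp => ?_⟩
      rcases step p hp with rfl | ⟨w, b, hw, _⟩ | hR
      · exact Or.inl rfl
      · exact absurd hw (by simp)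
      · exact Or.inr hR
    · rw [List.concat_eq_append] at hub
      cases b with
      | false =>
        refine ⟨enc w ++ [0], fun p hp => ?_⟩
        rcases step p hp with rfl | ⟨w', b', hw, hpe⟩ | hR
        · refine Or.inr ⟨enc_ne_nil (by rw [hub]; simp), ?_⟩
          rw [hub, dl_c0]
          refine mem_bag_m (hpc w _ ⟨[false], hub.symm⟩ huT) (hub ▸ huT) (Or.inr (Or.inl rfl))
        · obtain ⟨h1, h2⟩ := concat_inj ((hub.symm).trans hw)
          subst h1; subst h2
          exact Or.inl hpe
        · exact Or.inr hR
      | true =>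
        refine ⟨enc w ++ [1,0], fun p hp => ?_⟩
        rcases step p hp with rfl | ⟨w', b', hw, hpe⟩ | hR
        · refine Or.inr ⟨enc_ne_nil (by rw [hub]; simp), ?_⟩
          rw [hub, dl_c1]
          refine mem_bag_m' (hpc w _ ⟨[true], hub.symm⟩ huT)
            (int_of_true hpc hfull (hub ▸ huT)) (Or.inr (Or.inl rfl))
        · obtain ⟨h1, h2⟩ := concat_inj ((hub.symm).trans hw)
          subst h1; subst h2
          exact Or.inl hpe
        · exact Or.inr hR
  · -- ============ leaf vertex ============
    have hleaf : isLeaf T u := ⟨huT, hInt⟩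
    rcases u.eq_nil_or_concat with rfl | ⟨w0, b0, hub⟩
    · -- u = [] : the whole tree is {[]}
      refine ⟨[], fun p hp => ?_⟩
      obtain ⟨v, hvT, hc⟩ := hp
      have hv0 : v = [] := leaf_no_desc hpc hfull hleaf List.nil_prefix hvT
      subst hv0
      rcases hc with ⟨hpe, _⟩ | ⟨hint, _⟩
      · exact Or.inl hpe
      · exact absurd hint hInt
    · rw [List.concat_eq_append] at hub
      cases b0 with
      | true =>
        -- ===== leaf ending in true =====
        obtain ⟨s, n, hcan, hs⟩ := canon true u
        have hclash : ∀ z : List Bool, u ≠ z ++ [false] := fun z h => ends_clash hub h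
        have hLelim : ∀ v k, u = v ++ List.replicate k false → u = v := by
          intro v k hk
          cases k with
          | zero => simpa using hk
          | succ k => exact absurd (hk.trans (rep_concat v false k)) (hclash _)
        have step : ∀ p, u ∈ Bbag T p →
            (p = enc s) ∨ (∃ v, v ++ [false] = s ∧ p = enc v) ∨
            (p ≠ [] ∧ u ∈ Bbag T p.dropLast) := by
          intro p hp
          obtain ⟨v, hvT, hc⟩ := hp
          rcases hc with ⟨hpe, hx⟩ | ⟨hint, hc2⟩
          · -- C-bag at node v
            have hmain : IsR T v u → (p = enc s) ∨ (∃ v', v' ++ [false] = s ∧ p = enc v') ∨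
                (p ≠ [] ∧ u ∈ Bbag T p.dropLast) := by
              intro hR
              obtain ⟨⟨k, hk⟩, _⟩ := hR
              obtain ⟨hkn, hv⟩ := trail k v s n hs (hk.symm.trans hcan)
              rcases Nat.eq_zero_or_pos (n - k) with hz | hposnk
              · rw [hz] at hv; simp at hv
                exact Or.inl (hv ▸ hpe)
              · obtain ⟨d, hd⟩ : ∃ d, n - k = d + 1 := ⟨n - k - 1, by omega⟩
                rw [hd, rep_concat] at hv
                refine Or.inr (Or.inr ⟨hpe ▸ enc_ne_nil (by rw [hv]; simp), ?_⟩)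
                rw [hpe, hv, dl_c1]
                have hvT' : v ∈ T := hpc v u ⟨List.replicate k true, hk.symm⟩ huT
                have hsm : s ++ List.replicate d true ∈ T := hpc _ v (hv ▸ (List.prefix_append _ _)) hvT
                refine mem_bag_m' hsm (int_of_true hpc hfull (hv ▸ hvT')) (Or.inr (Or.inr (Or.inr ⟨⟨k, by rw [← hv, ← hk]⟩, hleaf⟩)))
            rcases hx with heq | hL | hR | hR0
            · exact hmain ⟨⟨0, by simp [heq]⟩, hleaf⟩
            · exact hmain ⟨⟨0, by simp [hLelim _ _ hL.1.choose_spec]⟩, hleaf⟩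
            · exact hmain hR
            · -- IsR (v ++ [false]) u : terminal
              obtain ⟨⟨k, hk⟩, _⟩ := hR0
              obtain ⟨hkn, hv⟩ := trail k (v ++ [false]) s n hs (hk.symm.trans hcan)
              rcases Nat.eq_zero_or_pos (n - k) with hz | hposnk
              · rw [hz] at hv; simp at hv
                exact Or.inr (Or.inl ⟨v, hv, hpe⟩)
              · obtain ⟨d, hd⟩ : ∃ d, n - k = d + 1 := ⟨n - k - 1, by omega⟩
                rw [hd, rep_concat] at hv
                exact (ends_clash hv rfl).elim
          · rcases hc2 with ⟨hpe, hx⟩ | ⟨hpe, hx⟩ | ⟨hpe, hx⟩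
            · -- M-bag
              rcases hx with heq | heq | hL | hR0
              · exact absurd hint (heq ▸ hleaf.2)
              · exact absurd heq (hclash v)
              · obtain ⟨⟨k, hk⟩, _⟩ := hL
                exact absurd (by rw [hk, rep_shift, rep_concat] :
                  u = (v ++ List.replicate k false) ++ [false]) (hclash _)
              · refine Or.inr (Or.inr ⟨by simp [hpe], ?_⟩)
                rw [hpe, dl_s]
                exact mem_bag_c hvT (Or.inr (Or.inr (Or.inr hR0)))
            · -- E-bag
              rcases hx with heq | hR | hR0 | hL1
              · exact absurd hint (heq ▸ hleaf.2)
              · refine Or.inr (Or.inr ⟨by simp [hpe], ?_⟩)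
                rw [hpe, dl_s]
                exact mem_bag_c hvT (Or.inr (Or.inr (Or.inl hR)))
              · refine Or.inr (Or.inr ⟨by simp [hpe], ?_⟩)
                rw [hpe, dl_s]
                exact mem_bag_c hvT (Or.inr (Or.inr (Or.inr hR0)))
              · -- IsL (v++[true]) u  ⇒  u = v ++ [true] ⇒ IsR v u with k = 1
                have huv : u = v ++ [true] := hLelim _ _ hL1.1.choose_spec
                refine Or.inr (Or.inr ⟨by simp [hpe], ?_⟩)
                rw [hpe, dl_s]
                exact mem_bag_c hvT (Or.inr (Or.inr (Or.inl ⟨⟨1, by simpa using huv⟩, hleaf⟩)))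
            · -- M'-bag
              rcases hx with heq | heq | hL1 | hR1
              · exact absurd hint (heq ▸ hleaf.2)
              · refine Or.inr (Or.inr ⟨by simp [hpe], ?_⟩)
                rw [hpe, dl_m']
                exact mem_bag_e hvT hint (Or.inr (Or.inr (Or.inr ⟨⟨0, by simp [heq]⟩, hleaf⟩)))
              · refine Or.inr (Or.inr ⟨by simp [hpe], ?_⟩)
                rw [hpe, dl_m']
                exact mem_bag_e hvT hint (Or.inr (Or.inr (Or.inr hL1)))
              · refine Or.inr (Or.inr ⟨by simp [hpe], ?_⟩)
                rw [hpe, dl_m']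
                obtain ⟨⟨k, hk⟩, _⟩ := hR1
                exact mem_bag_e hvT hint (Or.inr (Or.inl ⟨⟨k + 1, by rw [hk, rep_shift]⟩, hleaf⟩))
          
        rcases hs with rfl | hslast
        · -- s = [], apex is the root
          refine ⟨[], fun p hp => ?_⟩
          rcases step p hp with rfl | ⟨v, hvs, hpe⟩ | hR
          · exact Or.inl rfl
          · exact absurd hvs (by simp)
          · exact Or.inr hR
        · obtain ⟨q, rfl⟩ := eq_concat_of_getLast? (show s.getLast? = some false from hslast)
          refine ⟨enc q, fun p hp => ?_⟩
          rcases step p hp with rfl | ⟨v, hvs, hpe⟩ | hR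
          · -- p = enc (q ++ [false])
            refine Or.inr ⟨enc_ne_nil (by simp), ?_⟩
            rw [dl_c0]
            have hsT : q ++ [false] ∈ T := hpc _ u ⟨List.replicate n true, hcan.symm⟩ huT
            refine mem_bag_m (hpc q _ (List.prefix_append _ _) hsT) hsT
              (Or.inr (Or.inr (Or.inr ⟨⟨n, hcan⟩, hleaf⟩)))
          · obtain ⟨h1, _⟩ := concat_inj hvs
            subst h1
            exact Or.inl hpe
          · exact Or.inr hR
      | false =>
        -- ===== leaf ending in false =====
        obtain ⟨s, m, hcan, hs⟩ := canon false u
        have hclash : ∀ z : List Bool, u ≠ z ++ [true] := fun z h => ends_clash h hub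
        have hRelim : ∀ v k, u = v ++ List.replicate k true → u = v := by
          intro v k hk
          cases k with
          | zero => simpa using hk
          | succ k => exact absurd (hk.trans (rep_concat v true k)) (hclash _)
        have step : ∀ p, u ∈ Bbag T p →
            (p = enc s) ∨ (∃ v, v ++ [true] = s ∧ p = enc v ++ [1]) ∨
            (p ≠ [] ∧ u ∈ Bbag T p.dropLast) := by
          intro p hp
          obtain ⟨v, hvT, hc⟩ := hp
          rcases hc with ⟨hpe, hx⟩ | ⟨hint, hc2⟩
          · -- C-bag
            have hmain : IsL T v u → (p = enc s) ∨ (∃ v', v' ++ [true] = s ∧ p = enc v' ++ [1]) ∨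
                (p ≠ [] ∧ u ∈ Bbag T p.dropLast) := by
              intro hL
              obtain ⟨⟨k, hk⟩, _⟩ := hL
              obtain ⟨hkm, hv⟩ := trail k v s m hs (hk.symm.trans hcan)
              rcases Nat.eq_zero_or_pos (m - k) with hz | hposmk
              · rw [hz] at hv; simp at hv
                exact Or.inl (hv ▸ hpe)
              · obtain ⟨d, hd⟩ : ∃ d, m - k = d + 1 := ⟨m - k - 1, by omega⟩
                rw [hd, rep_concat] at hv
                refine Or.inr (Or.inr ⟨hpe ▸ enc_ne_nil (by rw [hv]; simp), ?_⟩)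
                rw [hpe, hv, dl_c0]
                have hvT' : v ∈ T := hpc v u ⟨List.replicate k false, hk.symm⟩ huT
                have hsm : s ++ List.replicate d false ∈ T := hpc _ v (hv ▸ (List.prefix_append _ _)) hvT
                refine mem_bag_m hsm (hv ▸ hvT') (Or.inr (Or.inr (Or.inl ⟨⟨k, by rw [← hv, ← hk]⟩, hleaf⟩)))
            rcases hx with heq | hL | hR | hR0
            · exact hmain ⟨⟨0, by simp [heq]⟩, hleaf⟩
            · exact hmain hL
            · exact hmain ⟨⟨0, by simp [hRelim _ _ hR.1.choose_spec]⟩, hleaf⟩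
            · -- IsR (v ++ [false]) u with k = 0 forced
              obtain ⟨⟨k, hk⟩, _⟩ := hR0
              cases k with
              | succ k => exact absurd (hk.trans (rep_concat _ true k)) (hclash _)
              | zero =>
                simp at hk
                exact hmain ⟨⟨1, by simpa using hk⟩, hleaf⟩
          · rcases hc2 with ⟨hpe, hx⟩ | ⟨hpe, hx⟩ | ⟨hpe, hx⟩
            · -- M-bag
              rcases hx with heq | heq | hL0 | hR0
              · exact absurd hint (heq ▸ hleaf.2)
              · refine Or.inr (Or.inr ⟨by simp [hpe], ?_⟩)
                rw [hpe, dl_s]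
                exact mem_bag_c hvT (Or.inr (Or.inl ⟨⟨1, by simpa using heq⟩, hleaf⟩))
              · refine Or.inr (Or.inr ⟨by simp [hpe], ?_⟩)
                rw [hpe, dl_s]
                obtain ⟨⟨k, hk⟩, _⟩ := hL0
                exact mem_bag_c hvT (Or.inr (Or.inl ⟨⟨k + 1, by rw [hk, rep_shift]⟩, hleaf⟩))
              · obtain ⟨⟨k, hk⟩, _⟩ := hR0
                cases k with
                | succ k => exact absurd (hk.trans (rep_concat _ true k)) (hclash _)
                | zero =>
                  simp at hk
                  refine Or.inr (Or.inr ⟨by simp [hpe], ?_⟩)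
                  rw [hpe, dl_s]
                  exact mem_bag_c hvT (Or.inr (Or.inl ⟨⟨1, by simpa using hk⟩, hleaf⟩))
            · -- E-bag
              rcases hx with heq | hR | hR0 | hL1
              · exact absurd hint (heq ▸ hleaf.2)
              · refine Or.inr (Or.inr ⟨by simp [hpe], ?_⟩)
                rw [hpe, dl_s]
                exact mem_bag_c hvT (Or.inr (Or.inr (Or.inl hR)))
              · refine Or.inr (Or.inr ⟨by simp [hpe], ?_⟩)
                rw [hpe, dl_s]
                exact mem_bag_c hvT (Or.inr (Or.inr (Or.inr hR0)))
              · -- IsL (v++[true]) u : terminal (meet from the left)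
                obtain ⟨⟨k, hk⟩, _⟩ := hL1
                obtain ⟨hkm, hv⟩ := trail k (v ++ [true]) s m hs (hk.symm.trans hcan)
                rcases Nat.eq_zero_or_pos (m - k) with hz | hposmk
                · rw [hz] at hv; simp at hv
                  exact Or.inr (Or.inl ⟨v, hv, hpe⟩)
                · obtain ⟨d, hd⟩ : ∃ d, m - k = d + 1 := ⟨m - k - 1, by omega⟩
                  rw [hd, rep_concat] at hv
                  exact (ends_clash rfl hv).elim
            · -- M'-bag
              rcases hx with heq | heq | hL1 | hR1
              · exact absurd hint (heq ▸ hleaf.2)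
              · exact absurd heq (hclash v)
              · refine Or.inr (Or.inr ⟨by simp [hpe], ?_⟩)
                rw [hpe, dl_m']
                exact mem_bag_e hvT hint (Or.inr (Or.inr (Or.inr hL1)))
              · obtain ⟨⟨k, hk⟩, _⟩ := hR1
                exact absurd (by rw [hk, rep_shift, rep_concat] :
                  u = (v ++ List.replicate k true) ++ [true]) (hclash _)
        rcases hs with rfl | hslast
        · refine ⟨[], fun p hp => ?_⟩
          rcases step p hp with rfl | ⟨v, hvs, hpe⟩ | hR
          · exact Or.inl rfl
          · exact absurd hvs (by simp)
          · exact Or.inr hR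
        · obtain ⟨q, rfl⟩ := eq_concat_of_getLast? (show s.getLast? = some true from hslast)
          refine ⟨enc q ++ [1], fun p hp => ?_⟩
          rcases step p hp with rfl | ⟨v, hvs, hpe⟩ | hR
          · -- p = enc (q ++ [true])
            refine Or.inr ⟨enc_ne_nil (by simp), ?_⟩
            rw [dl_c1]
            have hsT : q ++ [true] ∈ T := hpc _ u ⟨List.replicate m false, hcan.symm⟩ huT
            refine mem_bag_m' (hpc q _ (List.prefix_append _ _) hsT) (int_of_true hpc hfull hsT)
              (Or.inr (Or.inr (Or.inl ⟨⟨m, hcan⟩, hleaf⟩)))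
          · obtain ⟨h1, _⟩ := concat_inj hvs
            subst h1
            exact Or.inl hpe
          · exact Or.inr hR


include hpc hfull in
lemma dom_of_prefix_enc {v : List Bool} {p : List ℕ} (hvT : v ∈ T) (hp : p <+: enc v) :
    p ∈ Bdom T := by
  rcases prefix_enc v p hp with ⟨w, hwv, rfl⟩ | ⟨w, b, hwb, hforms⟩
  · exact ⟨w, hpc w v hwv hvT, Or.inl rfl⟩
  · have hwbT : w ++ [b] ∈ T := hpc _ v hwb hvT
    have hwT : w ∈ T := hpc w _ (List.prefix_append _ _) hwbT
    have hint : w ++ [false] ∈ T := by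
      cases b
      · exact hwbT
      · exact int_of_true hpc hfull hwbT
    rcases hforms with ⟨rfl, _⟩ | ⟨h1, _⟩
    · exact ⟨w, hwT, Or.inr ⟨hint, Or.inl rfl⟩⟩
    · rcases h1 with rfl | rfl
      · exact ⟨w, hwT, Or.inr ⟨hint, Or.inr (Or.inl rfl)⟩⟩
      · exact ⟨w, hwT, Or.inr ⟨hint, Or.inr (Or.inr rfl)⟩⟩

include hpc hfull in
lemma dom_pc' : ∀ p q : List ℕ, p <+: q → q ∈ Bdom T → p ∈ Bdom T := by
  intro p q hpq hq
  obtain ⟨v, hvT, hc⟩ := hq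
  rcases hc with rfl | ⟨hint, hc2⟩
  · exact dom_of_prefix_enc hpc hfull hvT hpq
  · rcases hc2 with rfl | rfl | rfl
    · rcases List.prefix_concat_iff.1 hpq with rfl | hp
      · exact ⟨v, hvT, Or.inr ⟨hint, Or.inl rfl⟩⟩
      · exact dom_of_prefix_enc hpc hfull hvT hp
    · rcases List.prefix_concat_iff.1 hpq with rfl | hp
      · exact ⟨v, hvT, Or.inr ⟨hint, Or.inr (Or.inl rfl)⟩⟩
      · exact dom_of_prefix_enc hpc hfull hvT hp
    · rw [show enc v ++ [1,0] = (enc v ++ [1]) ++ [0] by rw [List.append_assoc]; rfl] at hpq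
      rcases List.prefix_concat_iff.1 hpq with rfl | hp
      · exact ⟨v, hvT, Or.inr ⟨hint, Or.inr (Or.inr (by rw [List.append_assoc]; rfl))⟩⟩
      rcases List.prefix_concat_iff.1 hp with rfl | hp2
      · exact ⟨v, hvT, Or.inr ⟨hint, Or.inr (Or.inl rfl)⟩⟩
      · exact dom_of_prefix_enc hpc hfull hvT hp2

include hfin in
lemma dom_fin' : (Bdom T).Finite := by
  have hsub : Bdom T ⊆ (enc '' T) ∪ ((fun v => enc v ++ [0]) '' T) ∪
      ((fun v => enc v ++ [1]) '' T) ∪ ((fun v => enc v ++ [1,0]) '' T) := by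
    rintro p ⟨v, hvT, hc⟩
    rcases hc with rfl | ⟨_, hc2⟩
    · exact Or.inl (Or.inl (Or.inl ⟨v, hvT, rfl⟩))
    · rcases hc2 with rfl | rfl | rfl
      · exact Or.inl (Or.inl (Or.inr ⟨v, hvT, rfl⟩))
      · exact Or.inl (Or.inr ⟨v, hvT, rfl⟩)
      · exact Or.inr ⟨v, hvT, rfl⟩
  exact Set.Finite.subset ((((hfin.image _).union (hfin.image _)).union (hfin.image _)).union
    (hfin.image _)) hsub

-- width machinery
lemma sub_ncard {α : Type*} {s : Set α} (h : s.Subsingleton) : s.Finite ∧ s.ncard ≤ 1 := by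
  refine ⟨h.finite, ?_⟩
  rcases s.eq_empty_or_nonempty with rfl | ⟨a, ha⟩
  · simp
  · rw [show s = {a} from Set.eq_singleton_iff_unique_mem.2 ⟨ha, fun b hb => h hb ha⟩]
    simp

lemma bound4 {α : Type*} {A B C D : α → Prop} (hA : {x | A x}.Subsingleton)
    (hB : {x | B x}.Subsingleton) (hC : {x | C x}.Subsingleton)
    (hD : {x | D x}.Subsingleton) :
    {x | A x ∨ B x ∨ C x ∨ D x}.Finite ∧ {x | A x ∨ B x ∨ C x ∨ D x}.ncard ≤ 4 := by
  have hset : {x | A x ∨ B x ∨ C x ∨ D x} =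
      {x | A x} ∪ ({x | B x} ∪ ({x | C x} ∪ {x | D x})) := by
    ext x; simp [Set.mem_union]
  obtain ⟨fA, nA⟩ := sub_ncard hA
  obtain ⟨fB, nB⟩ := sub_ncard hB
  obtain ⟨fC, nC⟩ := sub_ncard hC
  obtain ⟨fD, nD⟩ := sub_ncard hD
  rw [hset]
  refine ⟨fA.union (fB.union (fC.union fD)), ?_⟩
  have h1 := Set.ncard_union_le {x | A x} ({x | B x} ∪ ({x | C x} ∪ {x | D x}))
  have h2 := Set.ncard_union_le {x | B x} ({x | C x} ∪ {x | D x})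
  have h3 := Set.ncard_union_le {x | C x} {x | D x}
  omega



lemma bag_c_sub (v : List Bool) : Bbag T (enc v) ⊆ Cb T v := by
  rintro x ⟨v', _, hc⟩
  rcases hc with ⟨hpe, hx⟩ | ⟨_, hc2⟩
  · rwa [enc_inj v v' hpe]
  · rcases hc2 with ⟨hpe, _⟩ | ⟨hpe, _⟩ | ⟨hpe, _⟩
    · exact absurd hpe (enc_ne_shift v v' [0] (Or.inl rfl))
    · exact absurd hpe (enc_ne_shift v v' [1] (Or.inr (Or.inl rfl)))
    · exact absurd hpe (enc_ne_shift v v' [1,0] (Or.inr (Or.inr rfl)))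

lemma m'_split (w : List ℕ) : w ++ [1,0] = (w ++ [1]) ++ [0] := by
  rw [List.append_assoc]; rfl

lemma bag_m_sub (v : List Bool) : Bbag T (enc v ++ [0]) ⊆ Mb T v := by
  rintro x ⟨v', _, hc⟩
  rcases hc with ⟨hpe, _⟩ | ⟨_, hc2⟩
  · exact absurd hpe.symm (enc_ne_shift v' v [0] (Or.inl rfl))
  · rcases hc2 with ⟨hpe, hx⟩ | ⟨hpe, _⟩ | ⟨hpe, _⟩
    · rwa [enc_inj v v' (concat_inj hpe).1]
    · exact absurd (concat_inj hpe).2 (by simp)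
    · rw [m'_split] at hpe
      exact absurd (concat_inj hpe).1 (enc_ne_shift v v' [1] (Or.inr (Or.inl rfl)))

lemma bag_e_sub (v : List Bool) : Bbag T (enc v ++ [1]) ⊆ Eb T v := by
  rintro x ⟨v', _, hc⟩
  rcases hc with ⟨hpe, _⟩ | ⟨_, hc2⟩
  · exact absurd hpe.symm (enc_ne_shift v' v [1] (Or.inr (Or.inl rfl)))
  · rcases hc2 with ⟨hpe, _⟩ | ⟨hpe, hx⟩ | ⟨hpe, _⟩
    · exact absurd (concat_inj hpe).2 (by simp)
    · rwa [enc_inj v v' (concat_inj hpe).1]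
    · rw [m'_split] at hpe
      exact absurd (concat_inj hpe).2 (by simp)

lemma bag_m'_sub (v : List Bool) : Bbag T (enc v ++ [1,0]) ⊆ M'b T v := by
  rintro x ⟨v', _, hc⟩
  rcases hc with ⟨hpe, _⟩ | ⟨_, hc2⟩
  · exact absurd hpe.symm (enc_ne_shift v' v [1,0] (Or.inr (Or.inr rfl)))
  · rcases hc2 with ⟨hpe, _⟩ | ⟨hpe, _⟩ | ⟨hpe, hx⟩
    · rw [m'_split] at hpe
      exact absurd (concat_inj hpe).1.symm (enc_ne_shift v' v [1] (Or.inr (Or.inl rfl)))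
    · rw [m'_split] at hpe
      exact absurd (concat_inj hpe).2 (by simp)
    · rw [m'_split, m'_split] at hpe
      rwa [enc_inj v v' (concat_inj (concat_inj hpe).1).1]

lemma ss_eq (v : List Bool) : {x : List Bool | x = v}.Subsingleton :=
  fun _ ha _ hb => ha.trans hb.symm

include hpc hfull in
lemma ss_isl (v : List Bool) : {x | IsL T v x}.Subsingleton :=
  fun _ ha _ hb => IsL_sub hpc hfull ha hb

include hpc hfull in
lemma ss_isr (v : List Bool) : {x | IsR T v x}.Subsingleton :=
  fun _ ha _ hb => IsR_sub hpc hfull ha hb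

include hpc hfull in
lemma width4 : ∀ p ∈ Bdom T, (Bbag T p).Finite ∧ (Bbag T p).ncard ≤ 4 := by
  intro p hp
  obtain ⟨v, hvT, hc⟩ := hp
  rcases hc with rfl | ⟨hint, hc2⟩
  · have hb : (Cb T v).Finite ∧ (Cb T v).ncard ≤ 4 := by
      unfold Cb
      exact bound4 (ss_eq v) (ss_isl hpc hfull v) (ss_isr hpc hfull v)
        (ss_isr hpc hfull (v ++ [false]))
    have hsub := bag_c_sub (T := T) v
    exact ⟨hb.1.subset hsub, le_trans (Set.ncard_le_ncard hsub hb.1) hb.2⟩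
  · rcases hc2 with rfl | rfl | rfl
    · have hb : (Mb T v).Finite ∧ (Mb T v).ncard ≤ 4 := by
        unfold Mb
        exact bound4 (ss_eq v) (ss_eq (v ++ [false])) (ss_isl hpc hfull (v ++ [false]))
          (ss_isr hpc hfull (v ++ [false]))
      have hsub := bag_m_sub (T := T) v
      exact ⟨hb.1.subset hsub, le_trans (Set.ncard_le_ncard hsub hb.1) hb.2⟩
    · have hb : (Eb T v).Finite ∧ (Eb T v).ncard ≤ 4 := by
        unfold Eb
        exact bound4 (ss_eq v) (ss_isr hpc hfull v) (ss_isr hpc hfull (v ++ [false]))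
          (ss_isl hpc hfull (v ++ [true]))
      have hsub := bag_e_sub (T := T) v
      exact ⟨hb.1.subset hsub, le_trans (Set.ncard_le_ncard hsub hb.1) hb.2⟩
    · have hb : (M'b T v).Finite ∧ (M'b T v).ncard ≤ 4 := by
        unfold M'b
        exact bound4 (ss_eq v) (ss_eq (v ++ [true])) (ss_isl hpc hfull (v ++ [true]))
          (ss_isr hpc hfull (v ++ [true]))
      have hsub := bag_m'_sub (T := T) v
      exact ⟨hb.1.subset hsub, le_trans (Set.ncard_le_ncard hsub hb.1) hb.2⟩

end TreeT
end TLL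

open SLTW in
open TLL in
theorem tree_linked_leaves_treewidth (T : Set (List Bool)) (hfin : T.Finite)
    (hpc : ∀ p q : List Bool, p <+: q → q ∈ T → p ∈ T)
    (hfull : ∀ p ∈ T, (p ++ [false] ∈ T ↔ p ++ [true] ∈ T)) :
    twLE T ({e | ∃ i : Bool, e.2 = e.1 ++ [i] ∧ e.2 ∈ T ∧ e.1 ∈ T} ∪
            {e | isLeaf T e.1 ∧ isLeaf T e.2 ∧ List.Lex (· < ·) e.1 e.2 ∧
                 ¬ ∃ r, isLeaf T r ∧ List.Lex (· < ·) e.1 r ∧ List.Lex (· < ·) r e.2}) 3 := by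
  classical
  refine ⟨⟨Bdom T, Bbag T, dom_fin' hfin, dom_pc' hpc hfull, ?_, ?_, ?_⟩, ?_⟩
  · -- cover_v
    intro v hv
    exact ⟨enc v, ⟨v, hv, Or.inl rfl⟩, mem_bag_c hv (Or.inl rfl)⟩
  · -- cover_e
    rintro e (⟨i, h2, h2T, h1T⟩ | ⟨hl1, hl2, hlex, hbet⟩)
    · cases i with
      | false =>
        have hint : e.1 ++ [false] ∈ T := h2 ▸ h2T
        exact ⟨enc e.1 ++ [0], ⟨e.1, h1T, Or.inr ⟨hint, Or.inl rfl⟩⟩,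
          mem_bag_m h1T hint (Or.inl rfl), mem_bag_m h1T hint (Or.inr (Or.inl h2))⟩
      | true =>
        have hint : e.1 ++ [false] ∈ T := int_of_true hpc hfull (h2 ▸ h2T)
        exact ⟨enc e.1 ++ [1,0], ⟨e.1, h1T, Or.inr ⟨hint, Or.inr (Or.inr rfl)⟩⟩,
          mem_bag_m' h1T hint (Or.inl rfl), mem_bag_m' h1T hint (Or.inr (Or.inl h2))⟩
    · obtain ⟨q, hqf, hR, hL⟩ := consec hfin hpc hfull hl1 hl2 hlex hbet
      have hqT : q ∈ T := hpc q _ (List.prefix_append _ _) hqf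
      exact ⟨enc q ++ [1], ⟨q, hqT, Or.inr ⟨hqf, Or.inr (Or.inl rfl)⟩⟩,
        mem_bag_e hqT hqf (Or.inr (Or.inr (Or.inl hR))),
        mem_bag_e hqT hqf (Or.inr (Or.inr (Or.inr hL)))⟩
  · -- conn
    intro p q r _ _ _ hop
    obtain ⟨l, ⟨_, hch, hnd, _, hh, hl⟩, hql⟩ := hop
    intro u hu
    obtain ⟨a, hT⟩ := region_tuft hpc hfull u
    have hch' : l.Chain' TLL.padj := List.IsChain.imp (fun a b h => h) hch
    exact tuft_path hT l p r q hch' hnd hh hl hu.1 hu.2 hql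
  · -- width
    intro p hp
    exact width4 hpc hfull p hp
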